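/- For integers a₁,…,aₙ and positive integers b₁,…,bₙ, the intersection ⋂ᵢ (aᵢ + bᵢℕ⁺) is nonempty if and only if for all i, j the number aᵢ - aⱼ is divisible by gcd(bᵢ, bⱼ). -/

import Mathlib

-- two-modulus integer CRT
lemma crt2 (m n : ℕ) (a b : ℤ) (h : ((Nat.gcd m n : ℤ)) ∣ a - b) :
    ∃ x : ℤ, (m:ℤ) ∣ x - a ∧ (n:ℤ) ∣ x - b := by
  obtain ⟨t, ht⟩ := h
  refine ⟨a - m * Nat.gcdA m n * t, ⟨-(Nat.gcdA m n * t), by ring⟩, ⟨Nat.gcdB m n * t, ?_⟩⟩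
  have hb := Nat.gcd_eq_gcd_ab m n
  have : a - b = (m * Nat.gcdA m n + n * Nat.gcdB m n) * t := by rw [← hb]; exact ht
  linarith [this]

lemma gcd_lcm_distrib_dvd (c m n : ℕ) (hc : c ≠ 0) (hm : m ≠ 0) (hn : n ≠ 0) :
    Nat.gcd c (Nat.lcm m n) ∣ Nat.lcm (Nat.gcd c m) (Nat.gcd c n) := by
  have h1 : Nat.gcd c (Nat.lcm m n) ≠ 0 := by
    simp [Nat.gcd_eq_zero_iff, hc]
  have h2 : Nat.lcm (Nat.gcd c m) (Nat.gcd c n) ≠ 0 := by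
    simp [Nat.lcm_ne_zero, Nat.gcd_eq_zero_iff, hc]
  rw [← Nat.factorization_le_iff_dvd h1 h2]
  rw [Nat.factorization_gcd hc (Nat.lcm_ne_zero hm hn),
    Nat.factorization_lcm hm hn,
    Nat.factorization_lcm (by simp [Nat.gcd_eq_zero_iff, hc]) (by simp [Nat.gcd_eq_zero_iff, hc]),
    Nat.factorization_gcd hc hm, Nat.factorization_gcd hc hn]
  rw [Finsupp.le_def]
  intro p
  simp only [Finsupp.inf_apply, Finsupp.sup_apply]
  exact le_of_eq (inf_sup_left _ _ _)

lemma gcd_finset_lcm_dvd {ι : Type*} (c : ℕ) (s : Finset ι) (f : ι → ℕ) (hc : c ≠ 0)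
    (hf : ∀ i ∈ s, f i ≠ 0) :
    Nat.gcd c (s.lcm f) ∣ s.lcm (fun i => Nat.gcd c (f i)) := by
  classical
  induction s using Finset.induction_on with
  | empty => simp [Nat.gcd_one_right]
  | insert j s hnot ih =>
    rw [Finset.lcm_insert, Finset.lcm_insert]
    have hlcm : s.lcm f ≠ 0 := by
      simp only [ne_eq, Finset.lcm_eq_zero_iff]
      rintro ⟨i, hi, h0⟩
      exact hf i (Finset.mem_insert_of_mem hi) h0
    have step := gcd_lcm_distrib_dvd c (f j) (s.lcm f) hc
      (hf j (Finset.mem_insert_self j s)) hlcm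
    refine dvd_trans ?_ (dvd_trans step ?_)
    · exact dvd_of_eq rfl
    · exact lcm_dvd_lcm dvd_rfl (ih (fun i hi => hf i (Finset.mem_insert_of_mem hi)))

lemma solvable (n : ℕ) (a : Fin n → ℤ) (b : Fin n → ℕ) (hb : ∀ i, b i ≠ 0)
    (h : ∀ i j, ((Nat.gcd (b i) (b j) : ℤ)) ∣ a i - a j) :
    ∃ x : ℤ, ∀ i, (b i : ℤ) ∣ x - a i := by
  induction n with
  | zero => exact ⟨0, fun i => i.elim0⟩
  | succ n ih =>
    obtain ⟨x, hx⟩ := ih (fun i => a i.succ) (fun i => b i.succ) (fun i => hb i.succ)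
      (fun i j => h i.succ j.succ)
    set L : ℕ := Finset.univ.lcm (fun i : Fin n => b i.succ) with hLdef
    have hLdvd : ∀ i : Fin n, b i.succ ∣ L := fun i => Finset.dvd_lcm (Finset.mem_univ i)
    have hLne : L ≠ 0 := by
      simp only [hLdef, ne_eq, Finset.lcm_eq_zero_iff]
      rintro ⟨i, _, h0⟩
      exact hb i.succ h0
    have h1 : ∀ i : Fin n, ((Nat.gcd (b 0) (b i.succ) : ℤ)) ∣ a 0 - x := by
      intro i
      have d1 : ((Nat.gcd (b 0) (b i.succ) : ℤ)) ∣ a 0 - a i.succ := h 0 i.succ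
      have d2 : ((Nat.gcd (b 0) (b i.succ) : ℤ)) ∣ x - a i.succ :=
        dvd_trans (Int.natCast_dvd_natCast.mpr (Nat.gcd_dvd_right _ _)) (hx i)
      have : a 0 - x = (a 0 - a i.succ) - (x - a i.succ) := by ring
      rw [this]; exact dvd_sub d1 d2
    have h2 : ((Nat.gcd (b 0) L : ℤ)) ∣ a 0 - x := by
      have hnat : ∀ i : Fin n, Nat.gcd (b 0) (b i.succ) ∣ (a 0 - x).natAbs := by
        intro i
        exact Int.natCast_dvd_natCast.mp (Int.dvd_natAbs.mpr (h1 i))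
      have hlcm2 : Finset.univ.lcm (fun i : Fin n => Nat.gcd (b 0) (b i.succ)) ∣
          (a 0 - x).natAbs := Finset.lcm_dvd (fun i _ => hnat i)
      have hdist := gcd_finset_lcm_dvd (b 0) Finset.univ (fun i : Fin n => b i.succ)
        (hb 0) (fun i _ => hb i.succ)
      exact Int.dvd_natAbs.mp (Int.natCast_dvd_natCast.mpr (dvd_trans hdist hlcm2))
    obtain ⟨z, hz0, hzx⟩ := crt2 (b 0) L (a 0) x h2
    refine ⟨z, fun i => ?_⟩
    refine Fin.cases ?_ ?_ i
    · exact hz0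
    · intro j
      have : z - a j.succ = (z - x) + (x - a j.succ) := by ring
      rw [this]
      exact dvd_add (dvd_trans (Int.natCast_dvd_natCast.mpr (hLdvd j)) hzx) (hx j)

theorem chinese_remainder_progressions (n : ℕ) (a : Fin n → ℤ) (b : Fin n → ℕ)
    (hb : ∀ i, 1 ≤ b i) :
    (⋂ i, {x : ℤ | ∃ m : ℕ, 1 ≤ m ∧ x = a i + (b i : ℤ) * m}).Nonempty ↔
      ∀ i j, ((Nat.gcd (b i) (b j) : ℤ)) ∣ (a i - a j) := by
  constructor
  · rintro ⟨x, hx⟩ i j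
    simp only [Set.mem_iInter, Set.mem_setOf_eq] at hx
    obtain ⟨mi, _, hmi⟩ := hx i
    obtain ⟨mj, _, hmj⟩ := hx j
    have di : ((Nat.gcd (b i) (b j) : ℤ)) ∣ x - a i :=
      dvd_trans (Int.natCast_dvd_natCast.mpr (Nat.gcd_dvd_left _ _)) ⟨mi, by rw [hmi]; ring⟩
    have dj : ((Nat.gcd (b i) (b j) : ℤ)) ∣ x - a j :=
      dvd_trans (Int.natCast_dvd_natCast.mpr (Nat.gcd_dvd_right _ _)) ⟨mj, by rw [hmj]; ring⟩
    have : a i - a j = (x - a j) - (x - a i) := by ring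
    rw [this]
    exact dvd_sub dj di
  · intro h
    obtain ⟨x, hx⟩ := solvable n a b (fun i => Nat.one_le_iff_ne_zero.mp (hb i)) h
    set L : ℕ := Finset.univ.lcm b with hLdef
    have hLdvd : ∀ i, b i ∣ L := fun i => Finset.dvd_lcm (Finset.mem_univ i)
    have hLne : L ≠ 0 := by
      simp only [hLdef, ne_eq, Finset.lcm_eq_zero_iff]
      rintro ⟨i, _, h0⟩
      exact Nat.one_le_iff_ne_zero.mp (hb i) h0
    have hL1 : (1:ℤ) ≤ L := by exact_mod_cast Nat.one_le_iff_ne_zero.mpr hLne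
    set K : ℕ := (Finset.univ.sup fun i => (a i - x).toNat) + 1 with hKdef
    set y : ℤ := x + (K : ℤ) * L with hydef
    refine ⟨y, Set.mem_iInter.mpr fun i => ?_⟩
    have hbi : (1:ℤ) ≤ b i := by exact_mod_cast hb i
    have hdvd : (b i : ℤ) ∣ y - a i := by
      have : y - a i = (x - a i) + (K:ℤ) * L := by rw [hydef]; ring
      rw [this]
      exact dvd_add (hx i) (Dvd.dvd.mul_left (Int.natCast_dvd_natCast.mpr (hLdvd i)) _)
    have hKbig : a i - x < (K : ℤ) := by
      have h1 : (a i - x).toNat ≤ Finset.univ.sup fun i => (a i - x).toNat :=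
        Finset.le_sup (f := fun i => (a i - x).toNat) (Finset.mem_univ i)
      have h2 : a i - x ≤ ((a i - x).toNat : ℤ) := Int.self_le_toNat _
      have : ((a i - x).toNat : ℤ) < K := by exact_mod_cast Nat.lt_succ_of_le h1
      linarith
    have hpos : 0 < y - a i := by
      have : (K:ℤ) ≤ (K:ℤ) * L := le_mul_of_one_le_right (by positivity) hL1
      rw [hydef]; linarith
    obtain ⟨q, hq⟩ := hdvd
    have hq0 : 0 < q := by nlinarith [hq ▸ hpos]
    refine ⟨q.toNat, by omega, ?_⟩
    have : ((q.toNat : ℤ)) = q := Int.toNat_of_nonneg hq0.le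
    rw [this]
    linarith [hq]
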